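/- Let m ≥ 1 be an integer and write P_μ^m(η) = α + βη + γη² + δη³ + εη⁴ (type I_{1,4}); set F_m(μ) = (ε+δ+γ+β)[(ε+δ+γ)(ε+δ) − εβ] − (2ε+δ)²α, the Hurwitz determinant Δ₃ of P_μ^m. For m > 4, F_m(μ) > 0 for all μ > 0. For 1 ≤ m ≤ 4 and μ > 0, one has [F_m(μ) > 0 and q_m¹(μ) ≥ 0] if and only if μ ≤ μ_m¹, where q_m¹(μ) = (1/((m+1)μ))·(dP_μ^m/dη)(1/2) and μ_m¹ is the unique positive root of q_m¹. -/

import Mathlib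

/-- Degree-0 coefficient `α` of the type `I_{1,4}` representative polynomial. -/
noncomputable def coeffA (μ : ℝ) : ℝ := (1 - μ) * (2 - μ) * (3 - μ) * (4 - μ)

/-- Degree-1 coefficient `β` of the type `I_{1,4}` representative polynomial. -/
noncomputable def coeffB (m : ℕ) (μ : ℝ) : ℝ :=
  5 * ((m : ℝ) + 1) * (1 - μ) * (5 - 3 * μ) * (2 - μ) * μ

/-- Degree-2 coefficient `γ` of the type `I_{1,4}` representative polynomial. -/
noncomputable def coeffC (m : ℕ) (μ : ℝ) : ℝ :=
  5 * ((m : ℝ) + 1) * ((m : ℝ) + 2) * (1 - μ) * (7 - 5 * μ) * μ ^ 2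

/-- Degree-3 coefficient `δ` of the type `I_{1,4}` representative polynomial. -/
noncomputable def coeffD (m : ℕ) (μ : ℝ) : ℝ :=
  10 * ((m : ℝ) + 1) * ((m : ℝ) + 2) * ((m : ℝ) + 3) * (1 - μ) * μ ^ 3

/-- Degree-4 coefficient `ε` of the type `I_{1,4}` representative polynomial. -/
noncomputable def coeffE (m : ℕ) (μ : ℝ) : ℝ :=
  ((m : ℝ) + 1) * ((m : ℝ) + 2) * ((m : ℝ) + 3) * ((m : ℝ) + 4) * μ ^ 4

/-- The representative polynomial `P_μ^m` of type `I_{1,4}` (real variable). -/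
noncomputable def PI14 (m : ℕ) (μ η : ℝ) : ℝ :=
  coeffA μ + coeffB m μ * η + coeffC m μ * η ^ 2 + coeffD m μ * η ^ 3 +
    coeffE m μ * η ^ 4

/-- Hurwitz determinant
`Δ₃ = (ε+δ+γ+β)[(ε+δ+γ)(ε+δ) - εβ] - (2ε+δ)²α` of `P_μ^m` (type `I_{1,4}`). -/
noncomputable def FI14 (m : ℕ) (μ : ℝ) : ℝ :=
  (coeffE m μ + coeffD m μ + coeffC m μ + coeffB m μ) *
      ((coeffE m μ + coeffD m μ + coeffC m μ) * (coeffE m μ + coeffD m μ) -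
        coeffE m μ * coeffB m μ) -
    (2 * coeffE m μ + coeffD m μ) ^ 2 * coeffA μ

/-- `q_m¹(μ) = (1/((m+1)μ))·(dP_μ^m/dη)(1/2)` for type `I_{1,4}`. -/
noncomputable def qI14' (m : ℕ) (μ : ℝ) : ℝ :=
  (1 / (((m : ℝ) + 1) * μ)) * deriv (fun η : ℝ => PI14 m μ η) (1 / 2)

private lemma deriv_PI14 (m : ℕ) (μ : ℝ) :
    deriv (fun η : ℝ => PI14 m μ η) (1 / 2) =
      coeffB m μ + coeffC m μ + (3 / 4) * coeffD m μ + (1 / 2) * coeffE m μ := by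
  have h0 : HasDerivAt (fun _ : ℝ => coeffA μ) 0 (1/2 : ℝ) := hasDerivAt_const _ _
  have h1 : HasDerivAt (fun η : ℝ => coeffB m μ * η) (coeffB m μ * 1) (1/2 : ℝ) :=
    (hasDerivAt_id _).const_mul _
  have h2 := (hasDerivAt_pow 2 (1/2 : ℝ)).const_mul (coeffC m μ)
  have h3 := (hasDerivAt_pow 3 (1/2 : ℝ)).const_mul (coeffD m μ)
  have h4 := (hasDerivAt_pow 4 (1/2 : ℝ)).const_mul (coeffE m μ)
  have h := (((h0.add h1).add h2).add h3).add h4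
  have h' : HasDerivAt (fun η : ℝ => PI14 m μ η)
      (coeffB m μ + coeffC m μ + (3 / 4) * coeffD m μ + (1 / 2) * coeffE m μ) (1/2 : ℝ) := by
    simp only [PI14]
    refine h.congr_deriv ?_
    push_cast
    ring
  exact h'.deriv

private lemma qI14'_eq (m : ℕ) (μ : ℝ) (hμ : μ ≠ 0) :
    qI14' m μ =
      5*(1-μ)*(5-3*μ)*(2-μ) + 5*((m:ℝ)+2)*(1-μ)*(7-5*μ)*μ +
      (15/2)*((m:ℝ)+2)*((m:ℝ)+3)*(1-μ)*μ^2 +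
      (1/2)*((m:ℝ)+2)*((m:ℝ)+3)*((m:ℝ)+4)*μ^3 := by
  have hm : ((m:ℝ)+1) ≠ 0 := by positivity
  rw [qI14', deriv_PI14]
  simp only [coeffB, coeffC, coeffD, coeffE]
  field_simp
  ring

private lemma root_iff (c : ℝ → ℝ) (hc : Continuous c) (r R : ℝ)
    (hc0 : 0 < c 0) (hr : 0 < r) (hcr : c r = 0)
    (huniq : ∀ x : ℝ, 0 < x → c x = 0 → x = r)
    (hneg : ∀ x : ℝ, R ≤ x → c x < 0) :
    r < R ∧ ∀ μ : ℝ, 0 < μ → (0 ≤ c μ ↔ μ ≤ r) := by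
  have hrR : r < R := by
    by_contra h
    exact absurd hcr (ne_of_lt (hneg r (le_of_not_gt h)))
  refine ⟨hrR, fun μ hμ => ⟨fun hq => ?_, fun hle => ?_⟩⟩
  · by_contra hle
    push_neg at hle
    rcases eq_or_lt_of_le hq with he | hpos
    · exact absurd (huniq μ hμ he.symm) (ne_of_gt hle)
    · have hμR : μ < R := by
        by_contra h'
        exact absurd hpos (not_lt.mpr (le_of_lt (hneg μ (le_of_not_gt h'))))
      obtain ⟨x, hx, hx0⟩ := intermediate_value_Ioo' (le_of_lt hμR) hc.continuousOn
        (Set.mem_Ioo.mpr ⟨hneg R le_rfl, hpos⟩)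
      have hxr : x = r := huniq x (lt_trans hμ hx.1) hx0
      exact absurd (hxr ▸ hx.1) (not_lt.mpr (le_of_lt hle))
  · rcases eq_or_lt_of_le hle with he | hlt
    · rw [he, hcr]
    · by_contra h
      push_neg at h
      obtain ⟨x, hx, hx0⟩ := intermediate_value_Ioo' (le_of_lt hμ) hc.continuousOn
        (Set.mem_Ioo.mpr ⟨h, hc0⟩)
      have hxr : x = r := huniq x hx.1 hx0
      exact absurd (hxr ▸ hx.2) (not_lt.mpr (le_of_lt hlt))

set_option maxHeartbeats 2000000 in
/-- Hurwitz determinant `Δ₃` for type `I_{1,4}`: `F_m(μ) > 0` for all `μ > 0`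
when `m > 4`; for `1 ≤ m ≤ 4` and `μ > 0`, `F_m(μ) > 0 ∧ q_m¹(μ) ≥ 0` holds iff
`μ ≤ μ_m¹`, `μ_m¹` being the unique positive root of `q_m¹`. -/
theorem FI14_sign :
    (∀ m : ℕ, 4 < m → ∀ μ : ℝ, 0 < μ → 0 < FI14 m μ) ∧
    (∀ m : ℕ, 1 ≤ m → m ≤ 4 → ∀ r : ℝ, 0 < r → qI14' m r = 0 →
      (∀ x : ℝ, 0 < x → qI14' m x = 0 → x = r) →
      ∀ μ : ℝ, 0 < μ → ((0 < FI14 m μ ∧ 0 ≤ qI14' m μ) ↔ μ ≤ r)) := by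
  constructor
  · intro m hm μ hμ
    obtain ⟨n, rfl⟩ : ∃ n, m = n + 5 := ⟨m - 5, by omega⟩
    have hF : FI14 (n + 5) μ = μ ^ 6 * (938649600 +
      874771200 * (n:ℝ) +
      338692800 * (n:ℝ)^2 +
      69730400 * (n:ℝ)^3 +
      8050800 * (n:ℝ)^4 +
      494200 * (n:ℝ)^5 +
      12600 * (n:ℝ)^6 +
      4787919360 * μ +
      5670893760 * (n:ℝ) * μ +
      2855006960 * (n:ℝ)^2 * μ +
      792490760 * (n:ℝ)^3 * μ +
      131055940 * (n:ℝ)^4 * μ +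
      12917290 * (n:ℝ)^5 * μ +
      702840 * (n:ℝ)^6 * μ +
      16290 * (n:ℝ)^7 * μ +
      9225183744 * μ^2 +
      13529557440 * (n:ℝ) * μ^2 +
      8566706160 * (n:ℝ)^2 * μ^2 +
      3063041000 * (n:ℝ)^3 * μ^2 +
      677163952 * (n:ℝ)^4 * μ^2 +
      94867510 * (n:ℝ)^5 * μ^2 +
      8230615 * (n:ℝ)^6 * μ^2 +
      404550 * (n:ℝ)^7 * μ^2 +
      8629 * (n:ℝ)^8 * μ^2 +
      8413171200 * μ^3 +
      15115944000 * (n:ℝ) * μ^3 +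
      11822026000 * (n:ℝ)^2 * μ^3 +
      5298357800 * (n:ℝ)^3 * μ^3 +
      1502992500 * (n:ℝ)^4 * μ^3 +
      280335850 * (n:ℝ)^5 * μ^3 +
      34426250 * (n:ℝ)^6 * μ^3 +
      2686950 * (n:ℝ)^7 * μ^3 +
      121050 * (n:ℝ)^8 * μ^3 +
      2400 * (n:ℝ)^9 * μ^3 +
      3652185600 * μ^4 +
      8124432960 * (n:ℝ) * μ^4 +
      7838287120 * (n:ℝ)^2 * μ^4 +
      4353487600 * (n:ℝ)^3 * μ^4 +
      1549673900 * (n:ℝ)^4 * μ^4 +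
      370767980 * (n:ℝ)^5 * μ^4 +
      60545610 * (n:ℝ)^6 * μ^4 +
      6676750 * (n:ℝ)^7 * μ^4 +
      476600 * (n:ℝ)^8 * μ^4 +
      19910 * (n:ℝ)^9 * μ^4 +
      370 * (n:ℝ)^10 * μ^4 +
      623185920 * μ^5 +
      1846172160 * (n:ℝ) * μ^5 +
      2271321600 * (n:ℝ)^2 * μ^5 +
      1581677920 * (n:ℝ)^3 * μ^5 +
      704195600 * (n:ℝ)^4 * μ^5 +
      212516320 * (n:ℝ)^5 * μ^5 +
      44636140 * (n:ℝ)^6 * μ^5 +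
      6552750 * (n:ℝ)^7 * μ^5 +
      660930 * (n:ℝ)^8 * μ^5 +
      43720 * (n:ℝ)^9 * μ^5 +
      1710 * (n:ℝ)^10 * μ^5 +
      30 * (n:ℝ)^11 * μ^5 +
      12902400 * μ^6 +
      103879680 * (n:ℝ) * μ^6 +
      196778240 * (n:ℝ)^2 * μ^6 +
      185447360 * (n:ℝ)^3 * μ^6 +
      106646736 * (n:ℝ)^4 * μ^6 +
      40924400 * (n:ℝ)^5 * μ^6 +
      10946860 * (n:ℝ)^6 * μ^6 +
      2078780 * (n:ℝ)^7 * μ^6 +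
      280038 * (n:ℝ)^8 * μ^6 +
      26220 * (n:ℝ)^9 * μ^6 +
      1625 * (n:ℝ)^10 * μ^6 +
      60 * (n:ℝ)^11 * μ^6 +
      1 * (n:ℝ)^12 * μ^6) := by
      simp only [FI14, coeffA, coeffB, coeffC, coeffD, coeffE]
      push_cast
      ring
    rw [hF]
    positivity
  · intro m hm1 hm4 r hr hqr huniq μ hμ
    interval_cases m

    · -- m = 1
      have hq : ∀ x : ℝ, x ≠ 0 → qI14' 1 x = 50 - 20*x^2 := by
        intro x hx
        rw [qI14'_eq 1 x hx]
        push_cast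
        ring
      have hcont : Continuous fun x : ℝ => 50 - 20*x^2 := by fun_prop
      have hcr' : (50:ℝ) - 20*r^2 = 0 := by rw [← hq r hr.ne']; exact hqr
      obtain ⟨hrR, hiff⟩ := root_iff (fun x : ℝ => 50 - 20*x^2) hcont r (2)
        (by norm_num) hr hcr'
        (fun x hx hcx => huniq x hx (by rw [hq x hx.ne']; exact hcx))
        (fun x hx => by
          show (50 - 20*x^2 : ℝ) < 0
          nlinarith [sq_nonneg x, hx])
      constructor
      · rintro ⟨-, hq0⟩
        exact (hiff μ hμ).mp (by rwa [hq μ hμ.ne'] at hq0)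
      · intro hle
        refine ⟨?_, by rw [hq μ hμ.ne']; exact (hiff μ hμ).mpr hle⟩
        have hμR : μ < (2 : ℝ) := lt_of_le_of_lt hle hrR
        have hFe : FI14 1 μ = μ ^ 6 * (2457600 - 768000*μ^2 + 38400*μ^4) := by
          simp only [FI14, coeffA, coeffB, coeffC, coeffD, coeffE]
          push_cast
          ring
        rw [hFe]
        have hgpos : (0 : ℝ) < 2457600 - 768000*μ^2 + 38400*μ^4 := by
          have h4 : μ ^ 2 < 4 := by nlinarith
          nlinarith [mul_pos (sub_pos.mpr h4) (show (0:ℝ) < 16 - μ ^ 2 by nlinarith)]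
        positivity

    · -- m = 2
      have hq : ∀ x : ℝ, x ≠ 0 → qI14' 2 x = 50 + 35*x - 20*x^2 - 5*x^3 := by
        intro x hx
        rw [qI14'_eq 2 x hx]
        push_cast
        ring
      have hcont : Continuous fun x : ℝ => 50 + 35*x - 20*x^2 - 5*x^3 := by fun_prop
      have hcr' : (50:ℝ) + 35*r - 20*r^2 - 5*r^3 = 0 := by rw [← hq r hr.ne']; exact hqr
      obtain ⟨hrR, hiff⟩ := root_iff (fun x : ℝ => 50 + 35*x - 20*x^2 - 5*x^3) hcont r (21/10)
        (by norm_num) hr hcr'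
        (fun x hx hcx => huniq x hx (by rw [hq x hx.ne']; exact hcx))
        (fun x hx => by
          show (50 + 35*x - 20*x^2 - 5*x^3 : ℝ) < 0
          nlinarith [sq_nonneg (x - 21/10), mul_nonneg (sub_nonneg.mpr hx) (sq_nonneg (x - 21/10))])
      constructor
      · rintro ⟨-, hq0⟩
        exact (hiff μ hμ).mp (by rwa [hq μ hμ.ne'] at hq0)
      · intro hle
        refine ⟨?_, by rw [hq μ hμ.ne']; exact (hiff μ hμ).mpr hle⟩
        have hμR : μ < (21/10 : ℝ) := lt_of_le_of_lt hle hrR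
        have hFe : FI14 2 μ = μ ^ 6 * (21060000 + 26424000*μ + 4217400*μ^2 - 3960000*μ^3 - 1098000*μ^4 + 12600*μ^6) := by
          simp only [FI14, coeffA, coeffB, coeffC, coeffD, coeffE]
          push_cast
          ring
        rw [hFe]
        have hgpos : (0 : ℝ) < 21060000 + 26424000*μ + 4217400*μ^2 - 3960000*μ^3 - 1098000*μ^4 + 12600*μ^6 := by
          nlinarith [mul_nonneg (pow_nonneg hμ.le 2) (sub_nonneg.mpr hμR.le),
            mul_nonneg (pow_nonneg hμ.le 3) (sub_nonneg.mpr hμR.le),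
            mul_nonneg (pow_nonneg hμ.le 4) (sub_nonneg.mpr hμR.le),
            mul_nonneg (pow_nonneg hμ.le 5) (sub_nonneg.mpr hμR.le),
            mul_nonneg hμ.le (sub_nonneg.mpr hμR.le), pow_nonneg hμ.le 6]
        positivity

    · -- m = 3
      have hq : ∀ x : ℝ, x ≠ 0 → qI14' 3 x = 50 + 70*x - 5*x^2 - 10*x^3 := by
        intro x hx
        rw [qI14'_eq 3 x hx]
        push_cast
        ring
      have hcont : Continuous fun x : ℝ => 50 + 70*x - 5*x^2 - 10*x^3 := by fun_prop
      have hcr' : (50:ℝ) + 70*r - 5*r^2 - 10*r^3 = 0 := by rw [← hq r hr.ne']; exact hqr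
      obtain ⟨hrR, hiff⟩ := root_iff (fun x : ℝ => 50 + 70*x - 5*x^2 - 10*x^3) hcont r (11/4)
        (by norm_num) hr hcr'
        (fun x hx hcx => huniq x hx (by rw [hq x hx.ne']; exact hcx))
        (fun x hx => by
          show (50 + 70*x - 5*x^2 - 10*x^3 : ℝ) < 0
          nlinarith [sq_nonneg (x - 11/4), mul_nonneg (sub_nonneg.mpr hx) (sq_nonneg (x - 11/4))])
      constructor
      · rintro ⟨-, hq0⟩
        exact (hiff μ hμ).mp (by rwa [hq μ hμ.ne'] at hq0)
      · intro hle
        refine ⟨?_, by rw [hq μ hμ.ne']; exact (hiff μ hμ).mpr hle⟩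
        have hμR : μ < (11/4 : ℝ) := lt_of_le_of_lt hle hrR
        have hFe : FI14 3 μ = μ ^ 6 * (99840000 + 252672000*μ + 204614400*μ^2 + 48768000*μ^3 - 8736000*μ^4 - 4224000*μ^5 - 230400*μ^6) := by
          simp only [FI14, coeffA, coeffB, coeffC, coeffD, coeffE]
          push_cast
          ring
        rw [hFe]
        have hgpos : (0 : ℝ) < 99840000 + 252672000*μ + 204614400*μ^2 + 48768000*μ^3 - 8736000*μ^4 - 4224000*μ^5 - 230400*μ^6 := by
          nlinarith [mul_nonneg (pow_nonneg hμ.le 2) (sub_nonneg.mpr hμR.le),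
            mul_nonneg (pow_nonneg hμ.le 3) (sub_nonneg.mpr hμR.le),
            mul_nonneg (pow_nonneg hμ.le 4) (sub_nonneg.mpr hμR.le),
            mul_nonneg (pow_nonneg hμ.le 5) (sub_nonneg.mpr hμR.le),
            mul_nonneg hμ.le (sub_nonneg.mpr hμR.le)]
        positivity

    · -- m = 4
      have hq : ∀ x : ℝ, x ≠ 0 → qI14' 4 x = 50 + 105*x + 25*x^2 - 12*x^3 := by
        intro x hx
        rw [qI14'_eq 4 x hx]
        push_cast
        ring
      have hcont : Continuous fun x : ℝ => 50 + 105*x + 25*x^2 - 12*x^3 := by fun_prop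
      have hcr' : (50:ℝ) + 105*r + 25*r^2 - 12*r^3 = 0 := by rw [← hq r hr.ne']; exact hqr
      obtain ⟨hrR, hiff⟩ := root_iff (fun x : ℝ => 50 + 105*x + 25*x^2 - 12*x^3) hcont r (22/5)
        (by norm_num) hr hcr'
        (fun x hx hcx => huniq x hx (by rw [hq x hx.ne']; exact hcx))
        (fun x hx => by
          show (50 + 105*x + 25*x^2 - 12*x^3 : ℝ) < 0
          nlinarith [sq_nonneg (x - 22/5), mul_nonneg (sub_nonneg.mpr hx) (sq_nonneg (x - 22/5))])
      constructor
      · rintro ⟨-, hq0⟩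
        exact (hiff μ hμ).mp (by rwa [hq μ hμ.ne'] at hq0)
      · intro hle
        refine ⟨?_, by rw [hq μ hμ.ne']; exact (hiff μ hμ).mpr hle⟩
        have hμR : μ < (22/5 : ℝ) := lt_of_le_of_lt hle hrR
        have hFe : FI14 4 μ = μ ^ 6 * (340410000 + 1298367000*μ + 1789422600*μ^2 + 1075410000*μ^3 + 245784000*μ^4 - 2961000*μ^5 - 4800600*μ^6) := by
          simp only [FI14, coeffA, coeffB, coeffC, coeffD, coeffE]
          push_cast
          ring
        rw [hFe]
        have hgpos : (0 : ℝ) < 340410000 + 1298367000*μ + 1789422600*μ^2 + 1075410000*μ^3 + 245784000*μ^4 - 2961000*μ^5 - 4800600*μ^6 := by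
          nlinarith [mul_nonneg (pow_nonneg hμ.le 3) (sub_nonneg.mpr hμR.le),
            mul_nonneg (pow_nonneg hμ.le 4) (sub_nonneg.mpr hμR.le),
            mul_nonneg (pow_nonneg hμ.le 5) (sub_nonneg.mpr hμR.le)]
        positivity
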